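/- For e_2 = 1 and 0 ≤ e_1 < c, the two expressions for the Euler characteristic agree: Σ_{t≥0} C(a_{n-3}, t)·C(a_{n-2} − c·t, 1)·C(−a_{n-3} + c, e_1 − t) = C(c, e_1)·C(a_{n-2}, 1) + Σ_{i=1}^{1} C(a_{n-3}, 1)·C(c − 1, e_1 − 1)·C(−c, 1)·C(a_{n-2}, 0), i.e., both sides equal C(c, e_1)·a_{n-2} − c·a_{n-3}·C(c−1, e_1−1). -/

import Mathlib

/-- Generalized binomial coefficient `C(x, k)` for integers `x, k`,
equal to `x(x-1)⋯(x-k+1)/k!` for `k ≥ 0` and `0` for `k < 0`. -/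
def gchZ (x k : ℤ) : ℤ := if k < 0 then 0 else Ring.choose x k.toNat

lemma gchZ_natCast (x : ℤ) (t : ℕ) : gchZ x t = Ring.choose x t := by
  simp [gchZ]

lemma gchZ_one (x : ℤ) : gchZ x 1 = x := by
  simpa [gchZ] using Ring.choose_one_right x

lemma gchZ_zero (x : ℤ) : gchZ x 0 = 1 := by
  simp [gchZ, Ring.choose_zero_right]

lemma gchZ_neg_one (x : ℤ) : gchZ x (-1) = 0 := by
  simp [gchZ]

lemma vandZ (x y : ℤ) (k : ℕ) :
    ∑ t ∈ Finset.range (k + 1), Ring.choose x t * Ring.choose y (k - t)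
      = Ring.choose (x + y) k := by
  rw [Ring.add_choose_eq k (Commute.all x y),
    Finset.Nat.sum_antidiagonal_eq_sum_range_succ_mk]

lemma mul_chooseZ (x : ℤ) (s : ℕ) :
    ((s : ℤ) + 1) * Ring.choose x (s + 1) = x * Ring.choose (x - 1) s := by
  have h := Ring.choose_smul_choose x (n := s + 1) (k := 1) (by omega)
  simpa [Ring.choose_one_right, nsmul_eq_mul] using h

/-- The case `e₂ = 1` of identity (2.7): for `c ≥ 2`, `n ≥ 4`, `0 ≤ e₁ < c`,
`Σ_{t≥0} C(a_{n-3}, t) C(a_{n-2} - ct, 1) C(-a_{n-3}+c, e₁-t)` and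
`C(c, e₁) C(a_{n-2}, 1) + C(a_{n-3}, 1) C(c-1, e₁-1) C(-c, 1) C(a_{n-2}, 0)`
both equal `C(c, e₁) a_{n-2} - c a_{n-3} C(c-1, e₁-1)`. -/
theorem identity_two_seven_e2_one (c : ℤ) (hc : 2 ≤ c) (a : ℕ → ℤ)
    (h1 : a 1 = 0) (h2 : a 2 = 1)
    (hrec : ∀ m, 3 ≤ m → a m = c * a (m - 1) - a (m - 2))
    (n : ℕ) (hn : 4 ≤ n) (e₁ : ℤ) (he₁ : 0 ≤ e₁) (he₁c : e₁ < c) :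
    (∑ t ∈ Finset.range (e₁.toNat + 1),
        gchZ (a (n - 3)) t * gchZ (a (n - 2) - c * t) 1 * gchZ (-a (n - 3) + c) (e₁ - t)
      = gchZ c e₁ * a (n - 2) - c * a (n - 3) * gchZ (c - 1) (e₁ - 1))
    ∧ gchZ c e₁ * gchZ (a (n - 2)) 1
        + gchZ (a (n - 3)) 1 * gchZ (c - 1) (e₁ - 1) * gchZ (-c) 1 * gchZ (a (n - 2)) 0
      = gchZ c e₁ * a (n - 2) - c * a (n - 3) * gchZ (c - 1) (e₁ - 1) := by
  obtain ⟨e, rfl⟩ : ∃ e : ℕ, (e : ℤ) = e₁ := ⟨e₁.toNat, Int.toNat_of_nonneg he₁⟩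
  set A := a (n - 3) with hA
  set B := a (n - 2) with hB
  constructor
  · rw [Int.toNat_natCast]
    have hsum : ∀ t ∈ Finset.range (e + 1),
        gchZ A t * gchZ (B - c * t) 1 * gchZ (-A + c) ((e : ℤ) - t)
          = B * (Ring.choose A t * Ring.choose (-A + c) (e - t))
            - c * ((t : ℤ) * Ring.choose A t * Ring.choose (-A + c) (e - t)) := by
      intro t ht
      have ht' : t ≤ e := by simpa [Nat.lt_succ_iff] using Finset.mem_range.mp ht
      have hcast : ((e : ℤ) - t) = ((e - t : ℕ) : ℤ) := by
        push_cast [Nat.cast_sub ht']; ring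
      rw [gchZ_natCast, gchZ_one, hcast, gchZ_natCast]
      ring
    rw [Finset.sum_congr rfl hsum, Finset.sum_sub_distrib, ← Finset.mul_sum, ← Finset.mul_sum,
      vandZ]
    have hxc : A + (-A + c) = c := by ring
    rw [hxc]
    rcases Nat.eq_zero_or_pos e with he | he
    · subst he
      simp [gchZ_natCast, gchZ_zero, gchZ_neg_one, Ring.choose_zero_right]
    · obtain ⟨d, rfl⟩ : ∃ d, e = d + 1 := ⟨e - 1, by omega⟩
      have h2 : ∑ t ∈ Finset.range (d + 1 + 1),
          (t : ℤ) * Ring.choose A t * Ring.choose (-A + c) (d + 1 - t)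
          = A * Ring.choose (c - 1) d := by
        rw [Finset.sum_range_succ']
        have hterm : ∀ s ∈ Finset.range (d + 1),
            ((s + 1 : ℕ) : ℤ) * Ring.choose A (s + 1) * Ring.choose (-A + c) (d + 1 - (s + 1))
              = A * (Ring.choose (A - 1) s * Ring.choose (-A + c) (d - s)) := by
          intro s _
          have : d + 1 - (s + 1) = d - s := by omega
          rw [this]
          push_cast
          rw [mul_chooseZ, mul_assoc]
        rw [Finset.sum_congr rfl hterm, ← Finset.mul_sum, vandZ]
        have : A - 1 + (-A + c) = c - 1 := by ring
        rw [this]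
        simp
      rw [h2]
      have hc1 : ((d + 1 : ℕ) : ℤ) - 1 = ((d : ℕ) : ℤ) := by push_cast; ring
      rw [hc1, gchZ_natCast, gchZ_natCast]
      ring
  · have hc1 : gchZ c e * gchZ B 1 + gchZ A 1 * gchZ (c - 1) ((e : ℤ) - 1) * gchZ (-c) 1 *
        gchZ B 0 = gchZ c e * B + A * gchZ (c - 1) ((e : ℤ) - 1) * (-c) * 1 := by
      rw [gchZ_one, gchZ_one, gchZ_one, gchZ_zero]
    rw [hc1]; ring
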